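/- Let k ≥ 1 be an integer and let F be a finite family of at least 64k³ open intervals on the real line with pairwise distinct endpoints (all 2|F| endpoint values are distinct). Then F contains a subfamily of 4k intervals that are either pairwise consecutive, or pairwise crossing, or pairwise parallel. -/

import Mathlib

/-- Two intervals (pairs `(s, t)` with `s < t`) are *consecutive* if, listing them with the
smaller left endpoint first as `(s₁,t₁), (s₂,t₂)`, we have `s₁ < t₁ < s₂ < t₂`. -/
def IntervalConsecutive (I J : ℝ × ℝ) : Prop :=
  (I.1 < I.2 ∧ I.2 < J.1 ∧ J.1 < J.2) ∨ (J.1 < J.2 ∧ J.2 < I.1 ∧ I.1 < I.2)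

/-- Two intervals are *crossing* if, listing them with the smaller left endpoint first as
`(s₁,t₁), (s₂,t₂)`, we have `s₁ < s₂ < t₁ < t₂`. -/
def IntervalCrossing (I J : ℝ × ℝ) : Prop :=
  (I.1 < J.1 ∧ J.1 < I.2 ∧ I.2 < J.2) ∨ (J.1 < I.1 ∧ I.1 < J.2 ∧ J.2 < I.2)

/-- Two intervals are *parallel* if, listing them with the smaller left endpoint first as
`(s₁,t₁), (s₂,t₂)`, we have `s₁ < s₂ < t₂ < t₁`. -/
def IntervalParallel (I J : ℝ × ℝ) : Prop :=
  (I.1 < J.1 ∧ J.1 < J.2 ∧ J.2 < I.2) ∨ (J.1 < I.1 ∧ I.1 < I.2 ∧ I.2 < J.2)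

/-- A family of intervals has *pairwise distinct endpoints* if all the endpoint values
occurring among (distinct) intervals of the family are pairwise distinct. -/
def DistinctEndpoints (F : Finset (ℝ × ℝ)) : Prop :=
  ∀ I ∈ F, ∀ J ∈ F, I ≠ J → I.1 ≠ J.1 ∧ I.1 ≠ J.2 ∧ I.2 ≠ J.1 ∧ I.2 ≠ J.2


/-- Mirsky-type lemma: a strict partial order on a finset of cardinality ≥ m*n has a
chain of size m+1 or an antichain of size n. -/
lemma mirskyAux {α : Type*} (S : Finset α) (r : α → α → Prop)
    (htr : ∀ a b c, r a b → r b c → r a c) (hirr : ∀ a, ¬ r a a)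
    (m n : ℕ) (hm : 1 ≤ m) (hmn : m * n ≤ S.card) :
    (∃ C ⊆ S, C.card = m + 1 ∧ ∀ x ∈ C, ∀ y ∈ C, x ≠ y → r x y ∨ r y x) ∨
    (∃ A ⊆ S, n ≤ A.card ∧ ∀ x ∈ A, ∀ y ∈ A, ¬ r x y) := by
  classical
  by_cases hch : ∃ C ⊆ S, m + 1 ≤ C.card ∧ ∀ x ∈ C, ∀ y ∈ C, x ≠ y → r x y ∨ r y x
  · obtain ⟨C, hCS, hCcard, hCchain⟩ := hch
    obtain ⟨C', hC'C, hC'card⟩ := Finset.exists_subset_card_eq hCcard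
    exact Or.inl ⟨C', hC'C.trans hCS, hC'card,
      fun x hx y hy h => hCchain x (hC'C hx) y (hC'C hy) h⟩
  · right
    push_neg at hch
    -- height function
    set P : α → Finset α → Prop := fun x C =>
      x ∈ C ∧ (∀ a ∈ C, a = x ∨ r a x) ∧ ∀ a ∈ C, ∀ b ∈ C, a ≠ b → r a b ∨ r b a with hP
    set h : α → ℕ := fun x =>
      ((S.powerset.filter (P x)).sup Finset.card) with hh
    have hsingle : ∀ x ∈ S, {x} ∈ S.powerset.filter (P x) := by
      intro x hx
      simp only [Finset.mem_filter, Finset.mem_powerset, hP]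
      refine ⟨Finset.singleton_subset_iff.mpr hx, Finset.mem_singleton_self x, ?_, ?_⟩
      · intro a ha; left; exact Finset.mem_singleton.mp ha
      · intro a ha b hb hab
        exact absurd ((Finset.mem_singleton.mp ha).trans (Finset.mem_singleton.mp hb).symm) hab
    have h1 : ∀ x ∈ S, 1 ≤ h x := by
      intro x hx
      have := Finset.le_sup (f := Finset.card) (hsingle x hx)
      simpa only [Finset.card_singleton] using this
    have hbound : ∀ x, h x ≤ m := by
      intro x
      apply Finset.sup_le
      intro C hC
      simp only [Finset.mem_filter, Finset.mem_powerset] at hC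
      by_contra hlt
      push_neg at hlt
      obtain ⟨a, ha, b, hb, hab, hn1, hn2⟩ := hch C hC.1 (by omega)
      rcases hC.2.2.2 a ha b hb hab with hr | hr
      exacts [hn1 hr, hn2 hr]
    have hmono : ∀ x ∈ S, ∀ y ∈ S, r x y → h x + 1 ≤ h y := by
      intro x hx y hy hxy
      have hne : (S.powerset.filter (P x)).Nonempty := ⟨{x}, hsingle x hx⟩
      obtain ⟨C, hC, hCeq⟩ := Finset.exists_mem_eq_sup _ hne Finset.card
      simp only [Finset.mem_filter, Finset.mem_powerset] at hC
      obtain ⟨hCS, hxC, hall, hchain⟩ := hC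
      have hyC : y ∉ C := by
        intro hyC
        rcases hall y hyC with rfl | hryx
        · exact hirr y hxy
        · exact hirr x (htr _ _ _ hxy hryx)
      have hins : insert y C ∈ S.powerset.filter (P y) := by
        simp only [Finset.mem_filter, Finset.mem_powerset, hP]
        refine ⟨Finset.insert_subset hy hCS, Finset.mem_insert_self y C, ?_, ?_⟩
        · intro a ha
          rcases Finset.mem_insert.mp ha with rfl | haC
          · exact Or.inl rfl
          · rcases hall a haC with rfl | hrax
            · exact Or.inr hxy
            · exact Or.inr (htr _ _ _ hrax hxy)
        · intro a ha b hb hab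
          rcases Finset.mem_insert.mp ha with rfl | haC
          · rcases Finset.mem_insert.mp hb with rfl | hbC
            · exact absurd rfl hab
            · rcases hall b hbC with rfl | hrbx
              · exact Or.inr hxy
              · exact Or.inr (htr _ _ _ hrbx hxy)
          · rcases Finset.mem_insert.mp hb with rfl | hbC
            · rcases hall a haC with rfl | hrax
              · exact Or.inl hxy
              · exact Or.inl (htr _ _ _ hrax hxy)
            · exact hchain a haC b hbC hab
      have := Finset.le_sup (f := Finset.card) hins
      rw [Finset.card_insert_of_notMem hyC] at this
      have hxc : h x = C.card := hCeq
      have hyc : C.card + 1 ≤ h y := this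
      omega
    -- pigeonhole on heights
    have hmaps : ∀ x ∈ S, h x - 1 ∈ Finset.range m := by
      intro x hx
      have := h1 x hx
      have := hbound x
      simp only [Finset.mem_range]; omega
    obtain ⟨b, _, hbfib⟩ := Finset.exists_le_card_fiber_of_mul_le_card_of_maps_to hmaps
      ⟨0, Finset.mem_range.mpr hm⟩ (by simpa using hmn)
    refine ⟨S.filter (fun x => h x - 1 = b), Finset.filter_subset _ _, hbfib, ?_⟩
    intro x hx y hy hxy
    simp only [Finset.mem_filter] at hx hy
    have h1x := h1 x hx.1
    have h1y := h1 y hy.1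
    have := hmono x hx.1 y hy.1 hxy
    omega

lemma interval_tri {I J : ℝ × ℝ} (hI : I.1 < I.2) (hJ : J.1 < J.2)
    (h1 : I.1 ≠ J.1) (h2 : I.1 ≠ J.2) (h3 : I.2 ≠ J.1) (h4 : I.2 ≠ J.2) :
    IntervalConsecutive I J ∨ IntervalCrossing I J ∨ IntervalParallel I J := by
  unfold IntervalConsecutive IntervalCrossing IntervalParallel
  rcases h1.lt_or_gt with h | h
  · rcases h3.lt_or_gt with h3' | h3'
    · exact Or.inl (Or.inl ⟨hI, h3', hJ⟩)
    · rcases h4.lt_or_gt with h4' | h4'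
      · exact Or.inr (Or.inl (Or.inl ⟨h, h3', h4'⟩))
      · exact Or.inr (Or.inr (Or.inl ⟨h, hJ, h4'⟩))
  · rcases h2.lt_or_gt.symm with h2' | h2'
    · exact Or.inl (Or.inr ⟨hJ, h2', hI⟩)
    · rcases h4.lt_or_gt.symm with h4' | h4'
      · exact Or.inr (Or.inl (Or.inr ⟨h, h2', h4'⟩))
      · exact Or.inr (Or.inr (Or.inr ⟨h, hI, h4'⟩))

/-- Every family of at least `64k³` open intervals with pairwise distinct
endpoints contains a subfamily of `4k` intervals that are pairwise consecutive, pairwise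
crossing, or pairwise parallel. -/
theorem stmt_6 (k : ℕ) (hk : 1 ≤ k) (F : Finset (ℝ × ℝ))
    (hint : ∀ I ∈ F, I.1 < I.2)
    (hdist : DistinctEndpoints F)
    (hcard : 64 * k ^ 3 ≤ F.card) :
    ∃ S ⊆ F, S.card = 4 * k ∧
      ((∀ I ∈ S, ∀ J ∈ S, I ≠ J → IntervalConsecutive I J) ∨
       (∀ I ∈ S, ∀ J ∈ S, I ≠ J → IntervalCrossing I J) ∨
       (∀ I ∈ S, ∀ J ∈ S, I ≠ J → IntervalParallel I J)) := by
  classical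
  -- Step 1: containment order
  have step1 := mirskyAux F (fun I J => I.1 < J.1 ∧ J.2 < I.2)
    (fun a b c hab hbc => ⟨hab.1.trans hbc.1, hbc.2.trans hab.2⟩)
    (fun a h => lt_irrefl _ h.1)
    (4 * k - 1) (16 * k ^ 2) (by omega)
    (calc (4 * k - 1) * (16 * k ^ 2) ≤ (4 * k) * (16 * k ^ 2) :=
        Nat.mul_le_mul_right _ (by omega)
      _ = 64 * k ^ 3 := by ring
      _ ≤ F.card := hcard)
  rcases step1 with ⟨C, hCS, hCcard, hCchain⟩ | ⟨A, hAS, hAcard, hAanti⟩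
  · refine ⟨C, hCS, by omega, Or.inr (Or.inr ?_)⟩
    intro I hI J hJ hne
    rcases hCchain I hI J hJ hne with ⟨h1, h2⟩ | ⟨h1, h2⟩
    · exact Or.inl ⟨h1, hint J (hCS hJ), h2⟩
    · exact Or.inr ⟨h1, hint I (hCS hI), h2⟩
  · -- Step 2: left-of order on A
    have step2 := mirskyAux A (fun I J => I.2 < J.1 ∧ I.1 < I.2 ∧ J.1 < J.2)
      (fun a b c hab hbc => ⟨hab.1.trans (hab.2.2.trans hbc.1), hab.2.1, hbc.2.2⟩)
      (fun a h => lt_irrefl _ (h.1.trans h.2.1))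
      (4 * k - 1) (4 * k) (by omega)
      (calc (4 * k - 1) * (4 * k) ≤ (4 * k) * (4 * k) := Nat.mul_le_mul_right _ (by omega)
        _ = 16 * k ^ 2 := by ring
        _ ≤ A.card := hAcard)
    rcases step2 with ⟨C, hCA, hCcard, hCchain⟩ | ⟨B, hBA, hBcard, hBanti⟩
    · refine ⟨C, hCA.trans hAS, by omega, Or.inl ?_⟩
      intro I hI J hJ hne
      rcases hCchain I hI J hJ hne with ⟨h1, h2, h3⟩ | ⟨h1, h2, h3⟩
      · exact Or.inl ⟨h2, h1, h3⟩
      · exact Or.inr ⟨h2, h1, h3⟩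
    · obtain ⟨B', hB'B, hB'card⟩ := Finset.exists_subset_card_eq hBcard
      refine ⟨B', (hB'B.trans hBA).trans hAS, hB'card, Or.inr (Or.inl ?_)⟩
      intro I hI J hJ hne
      have hIF : I ∈ F := hAS (hBA (hB'B hI))
      have hJF : J ∈ F := hAS (hBA (hB'B hJ))
      obtain ⟨d1, d2, d3, d4⟩ := hdist I hIF J hJF hne
      have hIi := hint I hIF
      have hJi := hint J hJF
      rcases interval_tri hIi hJi d1 d2 d3 d4 with hcon | hcr | hpar
      · exfalso
        rcases hcon with ⟨_, h2, _⟩ | ⟨_, h2, _⟩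
        · exact hBanti I (hB'B hI) J (hB'B hJ) ⟨h2, hIi, hJi⟩
        · exact hBanti J (hB'B hJ) I (hB'B hI) ⟨h2, hJi, hIi⟩
      · exact hcr
      · exfalso
        rcases hpar with ⟨h1, _, h3⟩ | ⟨h1, _, h3⟩
        · exact hAanti I (hBA (hB'B hI)) J (hBA (hB'B hJ)) ⟨h1, h3⟩
        · exact hAanti J (hBA (hB'B hJ)) I (hBA (hB'B hI)) ⟨h1, h3⟩
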